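/- arXiv:2108.07042 — 2 statements merged into one kernel-verified Lean document; each statement's English description precedes it below -/
import Mathlib

section
/- Let r ≥ 1 and let A be a set of k = n + p distinct integers consisting of exactly n ≥ 1 negative integers and exactly p ≥ 1 positive integers (0 ∉ A), and let 𝒜 be the multiset consisting of each element of A with multiplicity exactly r. Let α be an integer with 0 ≤ α ≤ rk − 1 and let m ∈ [1, k] be the integer with (m−1)r ≤ α < mr. If m ≤ n and m ≤ p, then |Σ_α(𝒜)| ≥ r(n(n+1)/2 + p(p+1)/2) + 1. -/
/-- `sigmaSeqAtLeast A r α` is the set of all subsequence sums of the multiset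
consisting of each element of `A` with multiplicity `r`, coming from
submultisets with at least `α` terms. -/
def sigmaSeqAtLeast (A : Finset ℤ) (r α : ℕ) : Finset ℤ :=
  (((r • A.val).powerset.filter (fun B => α ≤ Multiset.card B)).map
    Multiset.sum).toFinset

def triN : ℕ → ℕ
  | 0 => 0
  | n + 1 => triN n + (n + 1)

lemma two_triN (n : ℕ) : 2 * triN n = n * (n + 1) := by
  induction n with
  | zero => rfl
  | succ k ih =>
    show 2 * (triN k + (k + 1)) = _
    rw [Nat.mul_add, ih]; ring

def subSums (M : Multiset ℤ) : Finset ℤ := (M.powerset.map Multiset.sum).toFinset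

lemma mem_subSums {M : Multiset ℤ} {s : ℤ} : s ∈ subSums M ↔ ∃ B ≤ M, B.sum = s := by
  simp [subSums, Multiset.mem_powerset]

lemma subSums_mono {M M' : Multiset ℤ} (h : M ≤ M') : subSums M ⊆ subSums M' := by
  intro s hs
  rcases mem_subSums.1 hs with ⟨B, hB, rfl⟩
  exact mem_subSums.2 ⟨B, hB.trans h, rfl⟩

lemma msum_nonneg {M : Multiset ℤ} (h : ∀ x ∈ M, 0 ≤ x) : 0 ≤ M.sum :=
  Multiset.sum_nonneg h

lemma msum_nonpos {M : Multiset ℤ} (h : ∀ x ∈ M, x ≤ 0) : M.sum ≤ 0 := by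
  induction M using Multiset.induction_on with
  | empty => simp
  | cons a s ih =>
    simp only [Multiset.sum_cons]
    have h1 := h a (by simp)
    have h2 := ih (fun x hx => h x (by simp [hx]))
    linarith

lemma sum_le_of_le {B M : Multiset ℤ} (h : B ≤ M) (hM : ∀ x ∈ M, 0 ≤ x) :
    B.sum ≤ M.sum := by
  obtain ⟨C, rfl⟩ := Multiset.le_iff_exists_add.1 h
  have : 0 ≤ C.sum := msum_nonneg (fun x hx => hM x (by simp [hx]))
  simp only [Multiset.sum_add]; linarith

lemma le_sum_of_le {B M : Multiset ℤ} (h : B ≤ M) (hM : ∀ x ∈ M, x ≤ 0) :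
    M.sum ≤ B.sum := by
  obtain ⟨C, rfl⟩ := Multiset.le_iff_exists_add.1 h
  have : C.sum ≤ 0 := msum_nonpos (fun x hx => hM x (by simp [hx]))
  simp only [Multiset.sum_add]; linarith

lemma subSums_card_pos (r : ℕ) (hr : 1 ≤ r) :
    ∀ c (P : Finset ℤ), P.card = c → (∀ x ∈ P, 0 < x) →
      r * triN c + 1 ≤ (subSums (r • P.val)).card := by
  intro c
  induction c with
  | zero =>
    intro P hc _
    rw [Finset.card_eq_zero] at hc
    subst hc
    simp [subSums, triN]
  | succ c ih =>
    intro P hc hP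
    have hne : P.Nonempty := Finset.card_pos.1 (by omega)
    set b := P.max' hne with hbdef
    have hbP : b ∈ P := P.max'_mem hne
    set P' := P.erase b with hP'def
    have hcard' : P'.card = c := by
      rw [hP'def, Finset.card_erase_of_mem hbP, hc]
      omega
    have hP'pos : ∀ x ∈ P', 0 < x := fun x hx => hP x (Finset.mem_of_mem_erase hx)
    have hblt : ∀ x ∈ P', x < b := fun x hx =>
      lt_of_le_of_ne (P.le_max' x (Finset.mem_of_mem_erase hx)) (Finset.ne_of_mem_erase hx)
    have hbpos : 0 < b := hP b hbP
    set S' := (r • P'.val).sum with hS'def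
    have hval : P.val = {b} + P'.val := by
      rw [hP'def, Finset.erase_val, Multiset.singleton_add, Multiset.cons_erase hbP]
    have hsmul : r • P.val = Multiset.replicate r b + r • P'.val := by
      rw [hval, smul_add, Multiset.nsmul_singleton]
    have h0P' : (0 : ℤ) ∉ P' := fun h => lt_irrefl 0 (hP'pos 0 h)
    have hnnP' : ∀ x ∈ r • P'.val, (0:ℤ) ≤ x := fun x hx =>
      (hP'pos x (Multiset.mem_of_mem_nsmul hx)).le
    -- the old sums
    set Old := subSums (r • P'.val) with hOld
    -- the new sums
    set New := ((Finset.Icc 1 r) ×ˢ (insert 0 P')).image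
      (fun q : ℕ × ℤ => (q.1 : ℤ) * b + S' - q.2) with hNew
    have hOldSub : Old ⊆ subSums (r • P.val) := by
      apply subSums_mono
      rw [hsmul]
      exact le_add_self
    -- bounds for membership of a in insert 0 P'
    have haRange : ∀ a ∈ insert 0 P', (0:ℤ) ≤ a ∧ a < b := by
      intro a ha
      rcases Finset.mem_insert.1 ha with rfl | ha
      · exact ⟨le_refl 0, hbpos⟩
      · exact ⟨(hP'pos a ha).le, hblt a ha⟩
    have hNewSub : New ⊆ subSums (r • P.val) := by
      intro s hs
      rcases Finset.mem_image.1 hs with ⟨⟨t, a⟩, hq, rfl⟩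
      rcases Finset.mem_product.1 hq with ⟨ht, ha⟩
      rcases Finset.mem_Icc.1 ht with ⟨ht1, htr⟩
      refine mem_subSums.2 ⟨Multiset.replicate t b + (r • P'.val).erase a, ?_, ?_⟩
      · rw [hsmul]
        exact add_le_add ((Multiset.replicate_le_replicate b).2 htr)
          (Multiset.erase_le a _)
      · rw [Multiset.sum_add, Multiset.sum_replicate, nsmul_eq_mul]
        rcases Finset.mem_insert.1 ha with rfl | ha
        · rw [Multiset.erase_of_notMem]
          · simp [hS'def]
          · intro h
            exact lt_irrefl (0:ℤ) (hP'pos 0 (Multiset.mem_of_mem_nsmul h))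
        · have hmem : a ∈ r • P'.val := by
            rw [Multiset.mem_nsmul_of_ne_zero (by omega)]
            exact ha
          have := Multiset.sum_erase hmem
          have herase : ((r • P'.val).erase a).sum = S' - a := by
            rw [hS'def]; linarith
          rw [herase]; ring
    -- old sums are at most S'
    have hOldBound : ∀ s ∈ Old, s ≤ S' := by
      intro s hs
      rcases mem_subSums.1 hs with ⟨B, hB, rfl⟩
      exact sum_le_of_le hB hnnP'
    -- new sums are greater than S'
    have hNewBound : ∀ s ∈ New, S' < s := by
      intro s hs
      rcases Finset.mem_image.1 hs with ⟨⟨t, a⟩, hq, rfl⟩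
      rcases Finset.mem_product.1 hq with ⟨ht, ha⟩
      rcases Finset.mem_Icc.1 ht with ⟨ht1, _⟩
      obtain ⟨ha0, hab⟩ := haRange a ha
      have h1 : (1:ℤ) ≤ (t:ℤ) := by exact_mod_cast ht1
      have : b ≤ (t:ℤ) * b := le_mul_of_one_le_left hbpos.le h1
      simp only
      linarith
    have hdisj : Disjoint Old New := by
      rw [Finset.disjoint_left]
      intro s hs hs'
      exact absurd (hOldBound s hs) (not_le.2 (hNewBound s hs'))
    -- cardinality of New
    have hinj : Set.InjOn (fun q : ℕ × ℤ => (q.1 : ℤ) * b + S' - q.2)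
        (((Finset.Icc 1 r) ×ˢ (insert 0 P') : Finset (ℕ × ℤ)) : Set (ℕ × ℤ)) := by
      rintro ⟨t, a⟩ hta ⟨t', a'⟩ hta' heq
      simp only [Finset.mem_coe, Finset.mem_product, Finset.mem_Icc] at hta hta'
      obtain ⟨ha0, hab⟩ := haRange a hta.2
      obtain ⟨ha0', hab'⟩ := haRange a' hta'.2
      simp only at heq
      have hkey : ((t:ℤ) - t') * b = a - a' := by linarith [heq]
      have htt' : (t:ℤ) = t' := by
        rcases lt_trichotomy (t:ℤ) t' with h | h | h
        · exfalso
          have h1 : (1:ℤ) ≤ (t':ℤ) - t := by omega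
          have : b ≤ ((t':ℤ) - t) * b := le_mul_of_one_le_left hbpos.le h1
          have : ((t:ℤ) - t') * b ≤ -b := by nlinarith
          linarith
        · exact h
        · exfalso
          have h1 : (1:ℤ) ≤ (t:ℤ) - t' := by omega
          have : b ≤ ((t:ℤ) - t') * b := le_mul_of_one_le_left hbpos.le h1
          linarith
      have ht : t = t' := by exact_mod_cast htt'
      have haa : a = a' := by
        rw [htt'] at hkey; simp at hkey; linarith
      simp [ht, haa]
    have hcardNew : New.card = r * (c + 1) := by
      rw [hNew, Finset.card_image_of_injOn hinj, Finset.card_product, Nat.card_Icc,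
        Finset.card_insert_of_notMem h0P', hcard']
      simp
    have hIH := ih P' hcard' hP'pos
    have hunion : Old ∪ New ⊆ subSums (r • P.val) := Finset.union_subset hOldSub hNewSub
    have hcardU : (Old ∪ New).card = Old.card + New.card := Finset.card_union_of_disjoint hdisj
    have hle := Finset.card_le_card hunion
    rw [hcardU, hcardNew] at hle
    have htri : triN (c + 1) = triN c + (c + 1) := rfl
    have heqr : r * triN (c + 1) = r * triN c + r * (c + 1) := by rw [htri, Nat.mul_add]
    linarith [hIH, hle]

lemma sum_map_neg (M : Multiset ℤ) : (M.map (fun x => -x)).sum = -M.sum := by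
  induction M using Multiset.induction_on with
  | empty => simp
  | cons a s ih => simp [ih]; ring

lemma subSums_map_neg (M : Multiset ℤ) :
    subSums (M.map (fun x => -x)) = (subSums M).image (fun x => -x) := by
  ext s
  simp only [Finset.mem_image, mem_subSums]
  constructor
  · rintro ⟨B, hB, rfl⟩
    refine ⟨(B.map (fun x => -x)).sum, ⟨B.map (fun x => -x), ?_, rfl⟩, ?_⟩
    · have h := Multiset.map_le_map (f := fun x : ℤ => -x) hB
      rwa [Multiset.map_map, show ((fun x : ℤ => -x) ∘ fun x : ℤ => -x) = id by
        funext x; simp, Multiset.map_id] at h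
    · rw [sum_map_neg, neg_neg]
  · rintro ⟨x, ⟨B, hB, rfl⟩, rfl⟩
    exact ⟨B.map (fun x => -x), Multiset.map_le_map hB, by rw [sum_map_neg]⟩

lemma subSums_card_neg (r : ℕ) (hr : 1 ≤ r) (c : ℕ) (N : Finset ℤ)
    (hc : N.card = c) (hN : ∀ x ∈ N, x < 0) :
    r * triN c + 1 ≤ (subSums (r • N.val)).card := by
  set e : ℤ ↪ ℤ := ⟨fun x => -x, neg_injective⟩ with he
  have hmapval : (N.map e).val = N.val.map (fun x => -x) := rfl
  have hkey : r • N.val = (r • (N.map e).val).map (fun x => -x) := by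
    rw [Multiset.map_nsmul, hmapval, Multiset.map_map]
    congr 1
    rw [show ((fun x : ℤ => -x) ∘ fun x : ℤ => -x) = id by funext x; simp, Multiset.map_id]
  rw [hkey, subSums_map_neg, Finset.card_image_of_injective _ neg_injective]
  apply subSums_card_pos r hr c (N.map e)
  · rw [Finset.card_map, hc]
  · intro x hx
    rcases Finset.mem_map.1 hx with ⟨y, hy, rfl⟩
    have := hN y hy
    simp [he]
    linarith

lemma mem_sigmaSeqAtLeast {A : Finset ℤ} {r α : ℕ} {s : ℤ} :
    s ∈ sigmaSeqAtLeast A r α ↔ ∃ B ≤ r • A.val, α ≤ Multiset.card B ∧ B.sum = s := by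
  simp only [sigmaSeqAtLeast, Multiset.mem_toFinset, Multiset.mem_map, Multiset.mem_filter,
    Multiset.mem_powerset]
  constructor
  · rintro ⟨B, ⟨hB, hα⟩, rfl⟩
    exact ⟨B, hB, hα, rfl⟩
  · rintro ⟨B, hB, hα, rfl⟩
    exact ⟨B, ⟨hB, hα⟩, rfl⟩

theorem stmt_15 (n p r α m : ℕ) (hn : 1 ≤ n) (hp : 1 ≤ p) (hr : 1 ≤ r)
    (A : Finset ℤ) (hcard : A.card = n + p)
    (hneg : (A.filter (fun x => x < 0)).card = n)
    (hpos : (A.filter (fun x => 0 < x)).card = p)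
    (h0 : (0 : ℤ) ∉ A)
    (hα : α ≤ r * (n + p) - 1) (hm1 : 1 ≤ m) (hmk : m ≤ n + p)
    (hml : (m - 1) * r ≤ α) (hmu : α < m * r)
    (hmn : m ≤ n) (hmp : m ≤ p) :
    ((sigmaSeqAtLeast A r α).card : ℤ) ≥
      (r : ℤ) * ((n : ℤ) * ((n : ℤ) + 1) / 2 + (p : ℤ) * ((p : ℤ) + 1) / 2)
        + 1 := by
  classical
  set N := A.filter (fun x => x < 0) with hNdef
  set P := A.filter (fun x => 0 < x) with hPdef
  have hNneg : ∀ x ∈ N, x < 0 := fun x hx => (Finset.mem_filter.1 hx).2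
  have hPpos : ∀ x ∈ P, 0 < x := fun x hx => (Finset.mem_filter.1 hx).2
  have hvalsplit : A.val = N.val + P.val := by
    rw [hNdef, hPdef, Finset.filter_val, Finset.filter_val]
    have hcongr : Multiset.filter (fun x : ℤ => 0 < x) A.val
        = Multiset.filter (fun x : ℤ => ¬ x < 0) A.val := by
      apply Multiset.filter_congr
      intro x hx
      have hx0 : x ≠ 0 := fun h => h0 (h ▸ hx)
      constructor
      · intro h; omega
      · intro h; omega
    rw [hcongr, Multiset.filter_add_not]
  have hsmulsplit : r • A.val = r • N.val + r • P.val := by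
    rw [hvalsplit, smul_add]
  set SN := (r • N.val).sum with hSNdef
  set SP := (r • P.val).sum with hSPdef
  set F1 := (subSums (r • P.val)).image (fun s => SN + s) with hF1
  set F2 := (subSums (r • N.val)).image (fun s => SP + s) with hF2
  have hαn : α < n * r := lt_of_lt_of_le hmu (Nat.mul_le_mul_right r hmn)
  have hαp : α < p * r := lt_of_lt_of_le hmu (Nat.mul_le_mul_right r hmp)
  -- F1 is inside the sigma set
  have hF1sub : F1 ⊆ sigmaSeqAtLeast A r α := by
    intro s hs
    rcases Finset.mem_image.1 hs with ⟨x, hx, rfl⟩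
    rcases mem_subSums.1 hx with ⟨B, hB, rfl⟩
    refine mem_sigmaSeqAtLeast.2 ⟨r • N.val + B, ?_, ?_, ?_⟩
    · rw [hsmulsplit]
      exact add_le_add le_rfl hB
    · rw [Multiset.card_add, Multiset.card_nsmul]
      have h1 : Multiset.card N.val = n := hneg
      have h2 : r * n = n * r := Nat.mul_comm r n
      rw [h1]
      omega
    · rw [Multiset.sum_add]
  have hF2sub : F2 ⊆ sigmaSeqAtLeast A r α := by
    intro s hs
    rcases Finset.mem_image.1 hs with ⟨x, hx, rfl⟩
    rcases mem_subSums.1 hx with ⟨B, hB, rfl⟩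
    refine mem_sigmaSeqAtLeast.2 ⟨r • P.val + B, ?_, ?_, ?_⟩
    · rw [hsmulsplit, add_comm (r • N.val)]
      exact add_le_add le_rfl hB
    · rw [Multiset.card_add, Multiset.card_nsmul]
      have h1 : Multiset.card P.val = p := hpos
      have h2 : r * p = p * r := Nat.mul_comm r p
      rw [h1]
      omega
    · rw [Multiset.sum_add]
  -- bounds
  have hF1bd : ∀ s ∈ F1, s ≤ SN + SP := by
    intro s hs
    rcases Finset.mem_image.1 hs with ⟨x, hx, rfl⟩
    rcases mem_subSums.1 hx with ⟨B, hB, rfl⟩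
    have : B.sum ≤ SP := sum_le_of_le hB
      (fun x hx => (hPpos x (Multiset.mem_of_mem_nsmul hx)).le)
    linarith
  have hF2bd : ∀ s ∈ F2, SN + SP ≤ s := by
    intro s hs
    rcases Finset.mem_image.1 hs with ⟨x, hx, rfl⟩
    rcases mem_subSums.1 hx with ⟨B, hB, rfl⟩
    have : SN ≤ B.sum := le_sum_of_le hB
      (fun x hx => (hNneg x (Multiset.mem_of_mem_nsmul hx)).le)
    linarith
  have hinter : F1 ∩ F2 ⊆ {SN + SP} := by
    intro s hs
    rcases Finset.mem_inter.1 hs with ⟨h1, h2⟩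
    have := hF1bd s h1
    have := hF2bd s h2
    simp only [Finset.mem_singleton]
    omega
  have hintercard : (F1 ∩ F2).card ≤ 1 := by
    calc (F1 ∩ F2).card ≤ ({SN + SP} : Finset ℤ).card := Finset.card_le_card hinter
    _ = 1 := Finset.card_singleton _
  have hcardF1 : F1.card = (subSums (r • P.val)).card :=
    Finset.card_image_of_injective _ (add_right_injective SN)
  have hcardF2 : F2.card = (subSums (r • N.val)).card :=
    Finset.card_image_of_injective _ (add_right_injective SP)
  have hcP : r * triN p + 1 ≤ (subSums (r • P.val)).card :=
    subSums_card_pos r hr p P hpos hPpos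
  have hcN : r * triN n + 1 ≤ (subSums (r • N.val)).card :=
    subSums_card_neg r hr n N hneg hNneg
  have hunioncard := Finset.card_inter_add_card_union F1 F2
  have hunionsub : F1 ∪ F2 ⊆ sigmaSeqAtLeast A r α := Finset.union_subset hF1sub hF2sub
  have hle := Finset.card_le_card hunionsub
  have hfinal : r * triN n + r * triN p + 1 ≤ (sigmaSeqAtLeast A r α).card := by
    have h1 : F1.card + F2.card ≤ 1 + (F1 ∪ F2).card := by omega
    rw [hcardF1, hcardF2] at h1
    linarith [hcP, hcN, hle]
  -- arithmetic over ℤ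
  have h2n : ((n : ℤ) * ((n : ℤ) + 1)) = 2 * (triN n : ℤ) := by
    exact_mod_cast (two_triN n).symm
  have h2p : ((p : ℤ) * ((p : ℤ) + 1)) = 2 * (triN p : ℤ) := by
    exact_mod_cast (two_triN p).symm
  have hdn : (n : ℤ) * ((n : ℤ) + 1) / 2 = (triN n : ℤ) := by
    rw [h2n, Int.mul_ediv_cancel_left _ two_ne_zero]
  have hdp : (p : ℤ) * ((p : ℤ) + 1) / 2 = (triN p : ℤ) := by
    rw [h2p, Int.mul_ediv_cancel_left _ two_ne_zero]
  rw [ge_iff_le, hdn, hdp]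
  have : ((r * triN n + r * triN p + 1 : ℕ) : ℤ) ≤ ((sigmaSeqAtLeast A r α).card : ℤ) := by
    exact_mod_cast hfinal
  push_cast at this
  linarith
end

section
/- Let r ≥ 1 and let A be a set of k = n + p distinct integers consisting of exactly n ≥ 1 negative integers and exactly p ≥ 1 positive integers (0 ∉ A), and let 𝒜 be the multiset consisting of each element of A with multiplicity exactly r. Let α be an integer with 0 ≤ α ≤ rk − 1 and let m ∈ [1, k] be the integer with (m−1)r ≤ α < mr. If m > n and m > p, then |Σ_α(𝒜)| ≥ r(n(n+1)/2 + p(p+1)/2 − (m−n)(m−n+1)/2 − (m−p)(m−p+1)/2) + (2m−n−p)(mr − α) + 1. -/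
open Finset

lemma mem_sigma_iff (z : ℤ) (A : Finset ℤ) (r α : ℕ) :
    z ∈ sigmaSeqAtLeast A r α ↔
      ∃ B : Multiset ℤ, B ≤ r • A.val ∧ α ≤ Multiset.card B ∧ B.sum = z := by
  simp [sigmaSeqAtLeast, Multiset.mem_filter, and_assoc]

/-- parked-copies count at level `t` after `γ` copies have been placed. -/
def uc (n r γ t : ℕ) : ℕ := min r (γ - (n - 1 - t) * r)

/-- chain length. -/
def Lc (n r γ : ℕ) : ℕ := ∑ c ∈ Finset.range γ, (n - c / r)

/-- sum of the parked configuration. -/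
def MSf (n r γ : ℕ) (x : ℕ → ℤ) : ℤ := ∑ t ∈ Finset.range n, (uc n r γ t : ℤ) * x t

lemma min_sub_step (r q s e : ℕ) (hs : s < r) :
    min r (r * q + s + 1 - e * r) = min r (r * q + s - e * r) + (if e = q then 1 else 0) := by
  rcases lt_trichotomy e q with h | rfl | h
  · have h1 : (e + 1) * r ≤ q * r := Nat.mul_le_mul_right r h
    have h2 : (e + 1) * r = e * r + r := by ring
    have h3 : q * r = r * q := Nat.mul_comm q r
    simp only [if_neg (Nat.ne_of_lt h)]
    omega
  · have h3 : e * r = r * e := Nat.mul_comm e r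
    rw [if_pos rfl]
    omega
  · have h1 : (q + 1) * r ≤ e * r := Nat.mul_le_mul_right r h
    have h2 : (q + 1) * r = q * r + r := by ring
    have h3 : q * r = r * q := Nat.mul_comm q r
    simp only [if_neg (Nat.ne_of_gt h)]
    omega

lemma min_sub_lt (r q s e : ℕ) (hs : s < r) (he : q ≤ e) : min r (r * q + s - e * r) < r := by
  have h1 : q * r ≤ e * r := Nat.mul_le_mul_right r he
  have h3 : q * r = r * q := Nat.mul_comm q r
  omega

lemma uc_le (n r γ t : ℕ) : uc n r γ t ≤ r := min_le_left _ _

lemma div_lt_of_lt_mul' {γ n r : ℕ} (hr : 1 ≤ r) (h : γ < n * r) : γ / r < n := by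
  have := Nat.div_add_mod γ r
  have h2 : γ / r < n ∨ n ≤ γ / r := lt_or_ge _ _
  rcases h2 with h2 | h2
  · exact h2
  · exfalso
    have h3 : n * r ≤ (γ / r) * r := Nat.mul_le_mul_right r h2
    have h4 : (γ / r) * r = r * (γ / r) := Nat.mul_comm _ _
    omega

lemma uc_succ (n r γ : ℕ) (hr : 1 ≤ r) (hγ : γ + 1 ≤ n * r) (t : ℕ) (ht : t < n) :
    uc n r (γ + 1) t = uc n r γ t + (if t = n - 1 - γ / r then 1 else 0) := by
  have hdm : r * (γ / r) + γ % r = γ := Nat.div_add_mod γ r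
  have hsr : γ % r < r := Nat.mod_lt _ hr
  have hqn : γ / r < n := div_lt_of_lt_mul' hr (by omega)
  have key := min_sub_step r (γ / r) (γ % r) (n - 1 - t) hsr
  rw [hdm] at key
  rw [uc, uc, key]
  by_cases htd : t = n - 1 - γ / r
  · rw [if_pos (by omega : n - 1 - t = γ / r), if_pos htd]
  · rw [if_neg (by omega : ¬ n - 1 - t = γ / r), if_neg htd]

lemma uc_transit_lt (n r γ : ℕ) (hr : 1 ≤ r) (hγ : γ < n * r) (j : ℕ)
    (hj : j ≤ n - 1 - γ / r) : uc n r γ j < r := by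
  have hdm : r * (γ / r) + γ % r = γ := Nat.div_add_mod γ r
  have hsr : γ % r < r := Nat.mod_lt _ hr
  have hqn : γ / r < n := div_lt_of_lt_mul' hr hγ
  have key := min_sub_lt r (γ / r) (γ % r) (n - 1 - j) hsr (by omega)
  rw [hdm] at key
  exact key

lemma uc_sum (n r : ℕ) (hr : 1 ≤ r) :
    ∀ γ, γ ≤ n * r → ∑ t ∈ Finset.range n, uc n r γ t = γ := by
  intro γ
  induction γ with
  | zero => intro _; simp [uc]
  | succ γ ih =>
    intro hγ
    have hγ' : γ ≤ n * r := by omega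
    have hγlt : γ < n * r := by omega
    have hqn : γ / r < n := div_lt_of_lt_mul' hr hγlt
    have hn0 : 0 < n := Nat.lt_of_le_of_lt (Nat.zero_le _) hqn
    have hdn : n - 1 - γ / r < n :=
      lt_of_le_of_lt (Nat.sub_le _ _) (Nat.sub_lt hn0 one_pos)
    rw [Finset.sum_congr rfl (fun t htm => uc_succ n r γ hr hγ t (Finset.mem_range.mp htm))]
    rw [Finset.sum_add_distrib, ih hγ', Finset.sum_ite_eq' (Finset.range n)]
    simp [Finset.mem_range.mpr hdn]

lemma MSf_succ (n r γ : ℕ) (hr : 1 ≤ r) (hγ : γ + 1 ≤ n * r) (x : ℕ → ℤ) :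
    MSf n r (γ + 1) x = MSf n r γ x + x (n - 1 - γ / r) := by
  have hγlt : γ < n * r := by omega
  have hqn : γ / r < n := div_lt_of_lt_mul' hr hγlt
  have hn0 : 0 < n := Nat.lt_of_le_of_lt (Nat.zero_le _) hqn
  have hdn : n - 1 - γ / r < n :=
    lt_of_le_of_lt (Nat.sub_le _ _) (Nat.sub_lt hn0 one_pos)
  rw [MSf, MSf]
  rw [Finset.sum_congr rfl (fun t htm => by
    rw [uc_succ n r γ hr hγ t (Finset.mem_range.mp htm)])]
  have h2 : ∀ t ∈ Finset.range n,
      ((uc n r γ t + if t = n - 1 - γ / r then 1 else 0 : ℕ) : ℤ) * x t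
        = (uc n r γ t : ℤ) * x t + (if t = n - 1 - γ / r then x t else 0) := by
    intro t _
    split <;> push_cast <;> ring
  rw [Finset.sum_congr rfl h2, Finset.sum_add_distrib, Finset.sum_ite_eq' (Finset.range n)]
  simp [Finset.mem_range.mpr hdn]

lemma chain (r : ℕ) (hr : 1 ≤ r) (n : ℕ) (x : ℕ → ℤ)
    (hpos : ∀ i, i < n → 0 < x i)
    (hmono : ∀ i j, i < j → j < n → x i < x j) :
    ∀ γ, γ ≤ n * r →
    ∃ g : ℕ → ℤ, g 0 = 0 ∧
      (∀ i j, i < j → j ≤ Lc n r γ → g i < g j) ∧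
      g (Lc n r γ) = MSf n r γ x ∧
      (∀ i, i ≤ Lc n r γ → ∃ u : ℕ → ℕ,
        (∀ t, u t ≤ r) ∧ (∑ t ∈ Finset.range n, u t) ≤ γ ∧
        (∑ t ∈ Finset.range n, (u t : ℤ) * x t) = g i) := by
  intro γ
  induction γ with
  | zero =>
    intro _
    refine ⟨fun _ => 0, rfl, ?_, ?_, ?_⟩
    · intro i j hij hj
      simp [Lc] at hj
      omega
    · simp [Lc, MSf, uc]
    · intro i _
      exact ⟨fun _ => 0, fun t => Nat.zero_le _, by simp, by simp⟩
  | succ γ ih =>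
    intro hγ1
    have hγ : γ ≤ n * r := by omega
    have hγlt : γ < n * r := by omega
    obtain ⟨g, hg0, hgmono, hgtop, hgmem⟩ := ih hγ
    obtain ⟨q, hq⟩ : ∃ q, γ / r = q := ⟨_, rfl⟩
    have hqn : q < n := hq ▸ div_lt_of_lt_mul' hr hγlt
    have hLsucc : Lc n r (γ + 1) = Lc n r γ + ((n - 1 - q) + 1) := by
      rw [Lc, Finset.sum_range_succ, hq, ← Lc]
      congr 1
      omega
    have hMS : MSf n r (γ + 1) x = MSf n r γ x + x (n - 1 - q) := by
      rw [MSf_succ n r γ hr hγ1 x, hq]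
    have htransit : ∀ j, j ≤ n - 1 - q → uc n r γ j < r := by
      intro j hj
      exact uc_transit_lt n r γ hr hγlt j (by rw [hq]; exact hj)
    have hsum : ∑ t ∈ Finset.range n, uc n r γ t = γ := uc_sum n r hr γ hγ
    set L := Lc n r γ with hL
    set d := n - 1 - q with hd
    refine ⟨fun i => if i ≤ L then g i else MSf n r γ x + x (i - (L + 1)), ?_, ?_, ?_, ?_⟩
    · simp [hg0]
    · intro i j hij hj
      rw [hLsucc] at hj
      by_cases hiL : i ≤ L
      · by_cases hjL : j ≤ L
        · simp only [if_pos hiL, if_pos hjL]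
          exact hgmono i j hij hjL
        · simp only [if_pos hiL, if_neg hjL]
          have hjd : j - (L + 1) < n := by omega
          have h1 : g i ≤ MSf n r γ x := by
            rcases Nat.lt_or_ge i L with h | h
            · exact le_of_lt (hgtop ▸ hgmono i L h le_rfl)
            · have hiL' : i = L := le_antisymm hiL h
              rw [hiL', hgtop]
          have h2 : 0 < x (j - (L + 1)) := hpos _ hjd
          linarith
      · have hjL : ¬ j ≤ L := by omega
        simp only [if_neg hiL, if_neg hjL]
        have h3 : x (i - (L + 1)) < x (j - (L + 1)) := hmono _ _ (by omega) (by omega)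
        linarith
    · rw [hLsucc]
      have hnle : ¬ (L + (d + 1) ≤ L) := by omega
      simp only [if_neg hnle]
      rw [hMS]
      congr 2
      omega
    · intro i hi
      rw [hLsucc] at hi
      by_cases hiL : i ≤ L
      · obtain ⟨u, hu1, hu2, hu3⟩ := hgmem i hiL
        exact ⟨u, hu1, by omega, by rw [hu3]; simp only [if_pos hiL]⟩
      · have hjd : i - (L + 1) ≤ d := by omega
        have hjn : i - (L + 1) < n := by omega
        refine ⟨fun t => uc n r γ t + (if t = i - (L + 1) then 1 else 0), ?_, ?_, ?_⟩
        · intro t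
          by_cases h : t = i - (L + 1)
          · have h1 := htransit (i - (L + 1)) hjd
            have h2 : uc n r γ t = uc n r γ (i - (L + 1)) := by rw [h]
            have h3 : (if t = i - (L + 1) then 1 else 0) = 1 := if_pos h
            show uc n r γ t + (if t = i - (L + 1) then 1 else 0) ≤ r
            omega
          · simp [h, uc_le]
        · rw [Finset.sum_add_distrib, hsum, Finset.sum_ite_eq' (Finset.range n)]
          simp [Finset.mem_range.mpr hjn]
        · have h2 : ∀ t ∈ Finset.range n,
              ((uc n r γ t + if t = i - (L + 1) then 1 else 0 : ℕ) : ℤ) * x t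
               = (uc n r γ t : ℤ) * x t + (if t = i - (L + 1) then x t else 0) := by
            intro t _
            split <;> push_cast <;> ring
          rw [Finset.sum_congr rfl h2, Finset.sum_add_distrib,
            Finset.sum_ite_eq' (Finset.range n)]
          simp only [if_neg hiL]
          simp [Finset.mem_range.mpr hjn, MSf]

lemma sum_lin (c : ℤ) : ∀ d : ℕ, 2 * ∑ j ∈ Finset.range d, (c - (j : ℤ)) = d * (2 * c - d + 1) := by
  intro d
  induction d with
  | zero => simp
  | succ d ih =>
    rw [Finset.sum_range_succ]
    push_cast
    linear_combination ih

lemma Lc_cast (n r : ℕ) (hr : 1 ≤ r) :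
    ∀ γ, γ ≤ n * r →
      (Lc n r γ : ℤ) = r * (∑ j ∈ Finset.range (γ / r), ((n : ℤ) - j))
        + ((γ % r : ℕ) : ℤ) * ((n : ℤ) - ((γ / r : ℕ) : ℤ)) := by
  intro γ
  induction γ with
  | zero => intro _; simp [Lc]
  | succ γ ih =>
    intro hγ1
    have hγ : γ ≤ n * r := by omega
    have hγlt : γ < n * r := by omega
    obtain ⟨q, hq⟩ : ∃ q, γ / r = q := ⟨_, rfl⟩
    obtain ⟨s, hs⟩ : ∃ s, γ % r = s := ⟨_, rfl⟩
    have hqn : q < n := hq ▸ div_lt_of_lt_mul' hr hγlt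
    have hdm : r * q + s = γ := by rw [← hq, ← hs]; exact Nat.div_add_mod γ r
    have hsr : s < r := hs ▸ Nat.mod_lt _ hr
    have hstep : (Lc n r (γ + 1) : ℤ) = (Lc n r γ : ℤ) + ((n : ℤ) - q) := by
      have h0 : Lc n r (γ + 1) = Lc n r γ + (n - q) := by
        rw [Lc, Finset.sum_range_succ, hq, ← Lc]
      rw [h0]
      push_cast [Nat.cast_sub hqn.le]
      ring
    rcases Nat.lt_or_ge (s + 1) r with hcase | hcase
    · have hdiv : (γ + 1) / r = q ∧ (γ + 1) % r = s + 1 := by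
        rw [Nat.div_mod_unique (by omega : 0 < r)]
        omega
      rw [hstep, ih hγ, hq, hs, hdiv.1, hdiv.2]
      push_cast
      ring
    · have hr1 : r * (q + 1) = r * q + r := by ring
      have hdiv : (γ + 1) / r = q + 1 ∧ (γ + 1) % r = 0 := by
        rw [Nat.div_mod_unique (by omega : 0 < r)]
        omega
      rw [hstep, ih hγ, hq, hs, hdiv.1, hdiv.2, Finset.sum_range_succ]
      have hs2 : (s : ℤ) = (r : ℤ) - 1 := by
        have : s + 1 = r := by omega
        push_cast [← this]
        ring
      push_cast
      rw [hs2]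
      ring

lemma mem_sigma_of_u (A : Finset ℤ) (r α : ℕ) (n : ℕ) (x : ℕ → ℤ)
    (hmem : ∀ t, t < n → x t ∈ A)
    (hinj : ∀ i j, i < n → j < n → x i = x j → i = j)
    (u : ℕ → ℕ) (hu : ∀ t, u t ≤ r)
    (hcard : α + ∑ t ∈ Finset.range n, u t ≤ r * A.card) :
    (r • A.val).sum - (∑ t ∈ Finset.range n, (u t : ℤ) * x t) ∈ sigmaSeqAtLeast A r α := by
  set R : Multiset ℤ := ∑ t ∈ Finset.range n, (u t) • ({x t} : Multiset ℤ) with hR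
  have hRle : R ≤ r • A.val := by
    rw [Multiset.le_iff_count]
    intro a
    rw [Multiset.count_nsmul, hR, Multiset.count_sum']
    by_cases ha : ∃ t, t < n ∧ x t = a
    · obtain ⟨t0, ht0, hxa⟩ := ha
      have hcnt : ∀ t ∈ Finset.range n,
          Multiset.count a ((u t) • ({x t} : Multiset ℤ)) = if t = t0 then u t else 0 := by
        intro t htm
        rw [Multiset.count_nsmul, Multiset.count_singleton]
        by_cases h : t = t0
        · rw [if_pos h, if_pos (by rw [h, hxa]), mul_one]
        · have hne : a ≠ x t := by
            intro hh
            exact h (hinj t t0 (Finset.mem_range.mp htm) ht0 (hh.symm.trans hxa.symm))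
          rw [if_neg h, if_neg hne, mul_zero]
      rw [Finset.sum_congr rfl hcnt, Finset.sum_ite_eq' (Finset.range n)]
      rw [if_pos (Finset.mem_range.mpr ht0)]
      have h1 : Multiset.count a A.val = 1 :=
        Multiset.count_eq_one_of_mem A.nodup (hxa ▸ hmem t0 ht0)
      rw [h1, mul_one]
      exact hu t0
    · push_neg at ha
      have hcnt : ∀ t ∈ Finset.range n,
          Multiset.count a ((u t) • ({x t} : Multiset ℤ)) = 0 := by
        intro t htm
        rw [Multiset.count_nsmul, Multiset.count_singleton,
          if_neg (fun hh => (ha t (Finset.mem_range.mp htm)) hh.symm), mul_zero]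
      rw [Finset.sum_congr rfl hcnt, Finset.sum_const_zero]
      exact Nat.zero_le _
  have hRsum : R.sum = ∑ t ∈ Finset.range n, (u t : ℤ) * x t := by
    rw [hR, Multiset.sum_sum]
    refine Finset.sum_congr rfl (fun t _ => ?_)
    rw [Multiset.sum_nsmul, Multiset.sum_singleton]
    simp
  have hRcard : Multiset.card R = ∑ t ∈ Finset.range n, u t := by
    rw [hR]
    simp
  rw [mem_sigma_iff]
  refine ⟨r • A.val - R, Multiset.sub_le_self _ _, ?_, ?_⟩
  · rw [Multiset.card_sub hRle, Multiset.card_nsmul, hRcard]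
    have : Multiset.card A.val = A.card := rfl
    rw [this]
    omega
  · obtain ⟨C, hC⟩ := Multiset.le_iff_exists_add.mp hRle
    rw [hC, add_tsub_cancel_left, Multiset.sum_add, hRsum]
    ring

set_option maxHeartbeats 2000000 in
theorem stmt_17 (n p r α m : ℕ) (hn : 1 ≤ n) (hp : 1 ≤ p) (hr : 1 ≤ r)
    (A : Finset ℤ) (hcard : A.card = n + p)
    (hneg : (A.filter (fun x => x < 0)).card = n)
    (hpos : (A.filter (fun x => 0 < x)).card = p)
    (h0 : (0 : ℤ) ∉ A)
    (hα : α ≤ r * (n + p) - 1) (hm1 : 1 ≤ m) (hmk : m ≤ n + p)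
    (hml : (m - 1) * r ≤ α) (hmu : α < m * r)
    (hmn : n < m) (hmp : p < m) :
    ((sigmaSeqAtLeast A r α).card : ℤ) ≥
      (r : ℤ) * ((n : ℤ) * ((n : ℤ) + 1) / 2 + (p : ℤ) * ((p : ℤ) + 1) / 2
          - ((m : ℤ) - (n : ℤ)) * ((m : ℤ) - (n : ℤ) + 1) / 2
          - ((m : ℤ) - (p : ℤ)) * ((m : ℤ) - (p : ℤ) + 1) / 2)
        + (2 * (m : ℤ) - (n : ℤ) - (p : ℤ)) * ((m : ℤ) * (r : ℤ) - (α : ℤ))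
        + 1 := by
  classical
  have hrk1 : 1 * 1 ≤ r * (n + p) := Nat.mul_le_mul hr (by omega)
  set γ := r * (n + p) - α with hγdef
  have hαγ : α + γ = r * (n + p) := by omega
  set β := m * r - α with hβdef
  have hβ1 : 1 ≤ β := by omega
  have hβr : β ≤ r := by
    have h2 : (m - 1) * r + 1 * r = m * r := by
      rw [← add_mul]; congr 1; omega
    omega
  have hkm : (n + p - m) * r + m * r = (n + p) * r := by
    rw [← add_mul]; congr 1; omega
  have hrkcomm : r * (n + p) = (n + p) * r := Nat.mul_comm _ _
  have hγqs : γ = (n + p - m) * r + β := by omega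
  have hkmn : (n + p - m + 1) * r ≤ n * r := Nat.mul_le_mul_right r (by omega)
  have hkm1 : (n + p - m + 1) * r = (n + p - m) * r + r := by ring
  have hγn : γ ≤ n * r := by omega
  have hkmp : (n + p - m + 1) * r ≤ p * r := Nat.mul_le_mul_right r (by omega)
  have hγp : γ ≤ p * r := by omega
  -- negative part enumeration
  set eN := (A.filter (fun x => x < 0)).orderIsoOfFin hneg with heN
  set xN : ℕ → ℤ := fun i => if h : i < n then -((eN ⟨n - 1 - i, by omega⟩ : ℤ)) else 1
    with hxN
  have hxNpos : ∀ i, i < n → 0 < xN i := by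
    intro i hi
    simp only [hxN, dif_pos hi]
    have hmem := (eN ⟨n - 1 - i, by omega⟩).2
    rw [Finset.mem_filter] at hmem
    linarith [hmem.2]
  have hxNmono : ∀ i j, i < j → j < n → xN i < xN j := by
    intro i j hij hj
    have hi : i < n := by omega
    simp only [hxN, dif_pos hi, dif_pos hj]
    have hlt : (eN ⟨n - 1 - j, by omega⟩ : ℤ) < (eN ⟨n - 1 - i, by omega⟩ : ℤ) := by
      rw [Subtype.coe_lt_coe]
      exact eN.lt_iff_lt.mpr (Fin.mk_lt_mk.mpr (by omega))
    linarith
  have hmemN : ∀ t, t < n → -(xN t) ∈ A := by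
    intro t ht
    simp only [hxN, dif_pos ht, neg_neg]
    exact (Finset.mem_filter.mp (eN ⟨n - 1 - t, by omega⟩).2).1
  have hinjN : ∀ i j, i < n → j < n → -(xN i) = -(xN j) → i = j := by
    intro i j hi hj hij
    rcases lt_trichotomy i j with h | h | h
    · exact absurd hij (by have := hxNmono i j h hj; intro hh; linarith [neg_lt_neg this])
    · exact h
    · exact absurd hij (by have := hxNmono j i h hi; intro hh; linarith [neg_lt_neg this])
  -- positive part enumeration
  set eP := (A.filter (fun x => 0 < x)).orderIsoOfFin hpos with heP
  set xP : ℕ → ℤ := fun i => if h : i < p then ((eP ⟨i, h⟩ : ℤ)) else 1 with hxP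
  have hxPpos : ∀ i, i < p → 0 < xP i := by
    intro i hi
    simp only [hxP, dif_pos hi]
    have hmem := (eP ⟨i, hi⟩).2
    rw [Finset.mem_filter] at hmem
    exact hmem.2
  have hxPmono : ∀ i j, i < j → j < p → xP i < xP j := by
    intro i j hij hj
    have hi : i < p := by omega
    simp only [hxP, dif_pos hi, dif_pos hj]
    rw [Subtype.coe_lt_coe]
    exact eP.lt_iff_lt.mpr (Fin.mk_lt_mk.mpr hij)
  have hmemP : ∀ t, t < p → xP t ∈ A := by
    intro t ht
    simp only [hxP, dif_pos ht]
    exact (Finset.mem_filter.mp (eP ⟨t, ht⟩).2).1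
  have hinjP : ∀ i j, i < p → j < p → xP i = xP j → i = j := by
    intro i j hi hj hij
    rcases lt_trichotomy i j with h | h | h
    · exact absurd hij (ne_of_lt (hxPmono i j h hj))
    · exact h
    · exact absurd hij (ne_of_gt (hxPmono j i h hi))
  -- chains
  obtain ⟨gN, hgN0, hgNmono, _, hgNmem⟩ := chain r hr n xN hxNpos hxNmono γ hγn
  obtain ⟨gP, hgP0, hgPmono, _, hgPmem⟩ := chain r hr p xP hxPpos hxPmono γ hγp
  set T : ℤ := (r • A.val).sum with hT
  set LN := Lc n r γ with hLN0
  set LP := Lc p r γ with hLP0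
  set S2 := (Finset.range (LN + 1)).image (fun i => T + gN i) with hS2
  set S1 := (Finset.range (LP + 1)).image (fun i => T - gP i) with hS1
  have hS2sub : S2 ⊆ sigmaSeqAtLeast A r α := by
    intro z hz
    rw [hS2, Finset.mem_image] at hz
    obtain ⟨i, hi, rfl⟩ := hz
    rw [Finset.mem_range] at hi
    obtain ⟨u, hu1, hu2, hu3⟩ := hgNmem i (by omega)
    have hc : α + ∑ t ∈ Finset.range n, u t ≤ r * A.card := by rw [hcard]; omega
    have hmm := mem_sigma_of_u A r α n (fun t => -(xN t)) hmemN hinjN u hu1 hc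
    simp only [mul_neg, Finset.sum_neg_distrib, sub_neg_eq_add, hu3] at hmm
    exact hmm
  have hS1sub : S1 ⊆ sigmaSeqAtLeast A r α := by
    intro z hz
    rw [hS1, Finset.mem_image] at hz
    obtain ⟨i, hi, rfl⟩ := hz
    rw [Finset.mem_range] at hi
    obtain ⟨u, hu1, hu2, hu3⟩ := hgPmem i (by omega)
    have hc : α + ∑ t ∈ Finset.range p, u t ≤ r * A.card := by rw [hcard]; omega
    have hmm := mem_sigma_of_u A r α p xP hmemP hinjP u hu1 hc
    rw [hu3] at hmm
    exact hmm
  have hS2card : S2.card = LN + 1 := by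
    rw [hS2, Finset.card_image_of_injOn, Finset.card_range]
    intro i hi j hj hij
    rw [Finset.mem_coe, Finset.mem_range] at hi hj
    simp only [add_right_injective] at hij
    rcases lt_trichotomy i j with h | h | h
    · exact absurd (by linarith [hgNmono i j h (by omega)] : (T:ℤ) + gN i ≠ T + gN j) (by simp [hij])
    · exact h
    · exact absurd (by linarith [hgNmono j i h (by omega)] : (T:ℤ) + gN i ≠ T + gN j) (by simp [hij])
  have hS1card : S1.card = LP + 1 := by
    rw [hS1, Finset.card_image_of_injOn, Finset.card_range]
    intro i hi j hj hij
    rw [Finset.mem_coe, Finset.mem_range] at hi hj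
    rcases lt_trichotomy i j with h | h | h
    · exact absurd hij (by have := hgPmono i j h (by omega); intro hh; simp at hh; linarith)
    · exact h
    · exact absurd hij (by have := hgPmono j i h (by omega); intro hh; simp at hh; linarith)
  have hgNnn : ∀ i, i ≤ LN → 0 ≤ gN i := by
    intro i hi
    rcases Nat.eq_zero_or_pos i with h | h
    · rw [h, hgN0]
    · rw [← hgN0]; exact (hgNmono 0 i h hi).le
  have hgPnn : ∀ i, i ≤ LP → 0 ≤ gP i := by
    intro i hi
    rcases Nat.eq_zero_or_pos i with h | h
    · rw [h, hgP0]
    · rw [← hgP0]; exact (hgPmono 0 i h hi).le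
  have hinter : S1 ∩ S2 ⊆ {T} := by
    intro z hz
    rw [Finset.mem_inter, hS1, hS2, Finset.mem_image, Finset.mem_image] at hz
    obtain ⟨⟨i, hi, hzi⟩, ⟨j, hj, hzj⟩⟩ := hz
    rw [Finset.mem_range] at hi hj
    have h1 := hgPnn i (by omega)
    have h2 := hgNnn j (by omega)
    rw [Finset.mem_singleton]
    omega
  have hcount : LP + LN + 1 ≤ (sigmaSeqAtLeast A r α).card := by
    have hu := Finset.card_union_add_card_inter S1 S2
    have hic : (S1 ∩ S2).card ≤ 1 := le_trans (Finset.card_le_card hinter) (by simp)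
    have hsub : S1 ∪ S2 ⊆ sigmaSeqAtLeast A r α := Finset.union_subset hS1sub hS2sub
    have := Finset.card_le_card hsub
    omega
  -- arithmetic conclusion
  have hcastLN := Lc_cast n r hr γ hγn
  have hcastLP := Lc_cast p r hr γ hγp
  have hc1 : ((n + p - m : ℕ) : ℤ) = (n : ℤ) + p - m := by
    push_cast [Nat.cast_sub hmk]; ring
  have hc2 : ((β : ℕ) : ℤ) = (m : ℤ) * r - α := by
    rw [hβdef]; push_cast [Nat.cast_sub hmu.le]; ring
  have h2Tn : 2 * ((n : ℤ) * ((n : ℤ) + 1) / 2) = (n : ℤ) * ((n : ℤ) + 1) :=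
    Int.mul_ediv_cancel' (even_iff_two_dvd.mp (Int.even_mul_succ_self _))
  have h2Tp : 2 * ((p : ℤ) * ((p : ℤ) + 1) / 2) = (p : ℤ) * ((p : ℤ) + 1) :=
    Int.mul_ediv_cancel' (even_iff_two_dvd.mp (Int.even_mul_succ_self _))
  have h2Tmn : 2 * (((m : ℤ) - n) * ((m : ℤ) - n + 1) / 2) = ((m : ℤ) - n) * ((m : ℤ) - n + 1) :=
    Int.mul_ediv_cancel' (even_iff_two_dvd.mp (Int.even_mul_succ_self _))
  have h2Tmp : 2 * (((m : ℤ) - p) * ((m : ℤ) - p + 1) / 2) = ((m : ℤ) - p) * ((m : ℤ) - p + 1) :=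
    Int.mul_ediv_cancel' (even_iff_two_dvd.mp (Int.even_mul_succ_self _))
  have hcount' : ((LP : ℤ) + LN + 1) ≤ ((sigmaSeqAtLeast A r α).card : ℤ) := by
    exact_mod_cast hcount
  rcases Nat.lt_or_ge β r with hcase | hcase
  · -- β < r : γ / r = n + p - m, γ % r = β
    have hco : r * (n + p - m) = (n + p - m) * r := Nat.mul_comm _ _
    have hdm : γ / r = n + p - m ∧ γ % r = β := by
      rw [Nat.div_mod_unique (by omega : 0 < r)]
      omega
    rw [hdm.1, hdm.2, hc1, hc2] at hcastLN hcastLP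
    have hgN2 := sum_lin (n : ℤ) (n + p - m)
    have hgP2 := sum_lin (p : ℤ) (n + p - m)
    rw [hc1] at hgN2 hgP2
    have key : 2 * ((r : ℤ) * ((n : ℤ) * ((n : ℤ) + 1) / 2 + (p : ℤ) * ((p : ℤ) + 1) / 2
          - ((m : ℤ) - (n : ℤ)) * ((m : ℤ) - (n : ℤ) + 1) / 2
          - ((m : ℤ) - (p : ℤ)) * ((m : ℤ) - (p : ℤ) + 1) / 2)
        + (2 * (m : ℤ) - (n : ℤ) - (p : ℤ)) * ((m : ℤ) * (r : ℤ) - (α : ℤ)) + 1)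
        = 2 * ((LP : ℤ) + LN + 1) := by
      linear_combination (r : ℤ) * h2Tn + (r : ℤ) * h2Tp - (r : ℤ) * h2Tmn
        - (r : ℤ) * h2Tmp - 2 * hcastLN - 2 * hcastLP - (r : ℤ) * hgN2 - (r : ℤ) * hgP2
    linarith
  · -- β = r : γ / r = n + p - m + 1, γ % r = 0
    have hβeq : β = r := by omega
    have hco : r * (n + p - m + 1) = (n + p - m + 1) * r := Nat.mul_comm _ _
    have hdm : γ / r = n + p - m + 1 ∧ γ % r = 0 := by
      rw [Nat.div_mod_unique (by omega : 0 < r)]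
      omega
    rw [hdm.1, hdm.2] at hcastLN hcastLP
    have hc3 : ((n + p - m + 1 : ℕ) : ℤ) = (n : ℤ) + p - m + 1 := by
      push_cast [Nat.cast_sub hmk]; ring
    rw [hc3] at hcastLN hcastLP
    have hgN2 := sum_lin (n : ℤ) (n + p - m + 1)
    have hgP2 := sum_lin (p : ℤ) (n + p - m + 1)
    rw [hc3] at hgN2 hgP2
    have hαz : (α : ℤ) = (m : ℤ) * r - r := by
      have h' : α + r = m * r := by omega
      have h'' := congrArg (Nat.cast : ℕ → ℤ) h'
      push_cast at h''
      linarith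
    have key : 2 * ((r : ℤ) * ((n : ℤ) * ((n : ℤ) + 1) / 2 + (p : ℤ) * ((p : ℤ) + 1) / 2
          - ((m : ℤ) - (n : ℤ)) * ((m : ℤ) - (n : ℤ) + 1) / 2
          - ((m : ℤ) - (p : ℤ)) * ((m : ℤ) - (p : ℤ) + 1) / 2)
        + (2 * (m : ℤ) - (n : ℤ) - (p : ℤ)) * ((m : ℤ) * (r : ℤ) - (α : ℤ)) + 1)
        = 2 * ((LP : ℤ) + LN + 1) := by
      linear_combination (r : ℤ) * h2Tn + (r : ℤ) * h2Tp - (r : ℤ) * h2Tmn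
        - (r : ℤ) * h2Tmp - 2 * hcastLN - 2 * hcastLP - (r : ℤ) * hgN2 - (r : ℤ) * hgP2
        - (2 * (2 * (m : ℤ) - n - p)) * hαz
    linarith
end
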